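/- Let G be a locally finite simple graph on a vertex set V in which every vertex has positive degree, and let 𝓛 be its normalized Laplacian. Let S ⊆ V be a Λ-set for some Λ > 0, and let 0 ≤ ω < 1/Λ. If f, g : V → ℂ are functions such that h = f − g is supported in S, both ∑_{v∈V} |h(v)|² and ∑_{v∈V} |(𝓛h)(v)|² are finite, and ‖𝓛h‖ ≤ ω·‖h‖ (the Bernstein inequality satisfied by differences of Paley–Wiener functions of type ω), then f = g on all of V. -/
import Mathlib


/-- The normalized Laplacian of a locally finite simple graph, acting on `f : V → ℂ`:
`(𝓛 f) v = f v − ∑_{u ∼ v} f u / √(d u · d v)`. -/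
noncomputable def nLap {V : Type*} (G : SimpleGraph V) [G.LocallyFinite] (f : V → ℂ) (v : V) : ℂ :=
  f v - ∑ u ∈ G.neighborFinset v, f u / (Real.sqrt ((G.degree u : ℝ) * (G.degree v : ℝ)) : ℂ)

/-- If `S` is a `Λ`-set, `0 ≤ ω < 1/Λ`, and `f − g` is an ℓ²-function supported in
`S` satisfying the Bernstein inequality `‖𝓛(f−g)‖ ≤ ω‖f−g‖`, then `f = g`. -/
theorem eq_of_lambda_set_of_bernstein {V : Type*} (G : SimpleGraph V) [G.LocallyFinite]
    (hdeg : ∀ v : V, 0 < G.degree v)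
    (Λ : ℝ) (hΛ : 0 < Λ) (S : Set V)
    (hS : ∀ φ : V → ℂ, (∀ v, v ∉ S → φ v = 0) →
      Summable (fun v => ‖φ v‖ ^ 2) → Summable (fun v => ‖nLap G φ v‖ ^ 2) →
      Real.sqrt (∑' v, ‖φ v‖ ^ 2) ≤ Λ * Real.sqrt (∑' v, ‖nLap G φ v‖ ^ 2))
    (ω : ℝ) (hω0 : 0 ≤ ω) (hω : ω < 1 / Λ)
    (f g : V → ℂ)
    (hsupp : ∀ v, v ∉ S → f v - g v = 0)
    (hsum1 : Summable fun v => ‖f v - g v‖ ^ 2)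
    (hsum2 : Summable fun v => ‖nLap G (f - g) v‖ ^ 2)
    (hBern : Real.sqrt (∑' v, ‖nLap G (f - g) v‖ ^ 2) ≤
      ω * Real.sqrt (∑' v, ‖f v - g v‖ ^ 2)) :
    f = g := by
  have hsum1' : Summable (fun v => ‖(f - g) v‖ ^ 2) := hsum1
  have hA := hS (f - g) (fun v hv => hsupp v hv) hsum1' hsum2
  set A := Real.sqrt (∑' v, ‖(f - g) v‖ ^ 2) with hAdef
  have hAeq : A = Real.sqrt (∑' v, ‖f v - g v‖ ^ 2) := rfl
  have hB := hBern
  rw [← hAeq] at hB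
  have hA0 : 0 ≤ A := Real.sqrt_nonneg _
  have hΛω : Λ * ω < 1 := by
    have := (lt_div_iff₀ hΛ).mp hω
    nlinarith
  have hAzero : A = 0 := by
    have h1 : A ≤ Λ * (ω * A) := le_trans hA (by
      have := mul_le_mul_of_nonneg_left hB hΛ.le
      linarith)
    nlinarith
  have htsum0 : (∑' v, ‖(f - g) v‖ ^ 2) ≤ 0 := by
    exact Real.sqrt_eq_zero'.mp hAzero
  funext v
  have hle : ‖(f - g) v‖ ^ 2 ≤ ∑' v, ‖(f - g) v‖ ^ 2 :=
    Summable.le_tsum hsum1' v (fun _ _ => sq_nonneg _)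
  have : ‖(f - g) v‖ ^ 2 = 0 := le_antisymm (hle.trans htsum0) (sq_nonneg _)
  have h0 := pow_eq_zero_iff (n := 2) (by norm_num) |>.mp this
  simpa [sub_eq_zero] using h0
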